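/- Let A = Gr(x₁,…,x₆)/(x₁x₂, x₁x₃, x₁x₄, x₂x₅, x₂x₆, x₃x₄, x₅x₆) with differential D(ξ) = (x₁+⋯+x₆)ξ. Then the homology in degree 1 has dimension 0 and the homology in degree 2 has dimension 3; i.e., among D(x₁),…,D(x₆), exactly 5 are linearly independent, and the degree-2 component has dimension 8. -/
import Mathlib


noncomputable section
open Module LinearMap

/-- The generator `xᵢ` of the exterior (Grassmann) algebra on the generating set `V`. -/
def gGen (K : Type*) [Field K] (V : Type*) [DecidableEq V] (i : V) :
    ExteriorAlgebra K (V → K) :=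
  ExteriorAlgebra.ι K (Pi.single i 1)

/-- The relation identifying with `0` the quadratic monomials `xᵢxⱼ` for edges `{i,j}`
of the graph `G`. -/
def graphRel (K : Type*) [Field K] (V : Type*) [DecidableEq V] (G : SimpleGraph V) :
    ExteriorAlgebra K (V → K) → ExteriorAlgebra K (V → K) → Prop :=
  fun u v => ∃ i j : V, G.Adj i j ∧ u = gGen K V i * gGen K V j ∧ v = 0

/-- The monomial quotient `A_G = Gr(V)/⟨xᵢxⱼ : {i,j} ∈ E(G)⟩` of the Grassmann algebra. -/
abbrev GraphAlg (K : Type*) [Field K] (V : Type*) [DecidableEq V] (G : SimpleGraph V) :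
    Type _ :=
  RingQuot (graphRel K V G)

/-- The differential `D(ξ) = (Σ_{x∈V} x)·ξ` on `A_G`. -/
def graphD (K : Type*) [Field K] (V : Type*) [Fintype V] [DecidableEq V]
    (G : SimpleGraph V) : GraphAlg K V G →ₗ[K] GraphAlg K V G :=
  LinearMap.mulLeft K (∑ i : V, RingQuot.mkAlgHom K (graphRel K V G) (gGen K V i))

/-- The dimension of the homology `H(A_G) = ker D / im D` (as `im D ⊆ ker D`). -/
def graphHdim (K : Type*) [Field K] (V : Type*) [Fintype V] [DecidableEq V]
    (G : SimpleGraph V) : ℕ :=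
  finrank K ↥(ker (graphD K V G)) - finrank K ↥(range (graphD K V G))

end

/-- The relation graph on six vertices with edges
`{1,2},{1,3},{1,4},{2,5},{2,6},{3,4},{5,6}` (here `0`-indexed), encoding the quotient
`A = Gr(x₁,…,x₆)/(x₁x₂, x₁x₃, x₁x₄, x₂x₅, x₂x₆, x₃x₄, x₅x₆)`. -/
def G16 : SimpleGraph (Fin 6) :=
  SimpleGraph.fromRel fun i j =>
    (i, j) ∈ ([(0, 1), (0, 2), (0, 3), (1, 4), (1, 5), (2, 3), (4, 5)] : List (Fin 6 × Fin 6))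

noncomputable section
namespace P16
variable (K : Type*) [Field K]

def gg : Fin 6 → GraphAlg K (Fin 6) G16 :=
  fun i => RingQuot.mkAlgHom K (graphRel K (Fin 6) G16) (gGen K (Fin 6) i)

instance : DecidableRel G16.Adj := fun i j => by
  unfold G16; exact decidable_of_iff _ (SimpleGraph.fromRel_adj _ i j).symm

example : G16.Adj 0 1 := by decide
example : ¬ G16.Adj 0 4 := by decide

lemma bad_zero {i j : Fin 6} (h : i = j ∨ G16.Adj i j) : gg K i * gg K j = 0 := by
  rcases h with rfl | h
  · simp only [gg, ← map_mul]; rw [gGen, ExteriorAlgebra.ι_sq_zero, map_zero]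
  · simp only [gg, ← map_mul]; rw [RingQuot.mkAlgHom_rel K ⟨i, j, h, rfl, rfl⟩, map_zero]

lemma anti (i j : Fin 6) : gg K j * gg K i = -(gg K i * gg K j) := by
  have h := ExteriorAlgebra.ι_add_mul_swap (R := K) (Pi.single i 1 : Fin 6 → K) (Pi.single j 1)
  have := congrArg (RingQuot.mkAlgHom K (graphRel K (Fin 6) G16)) h
  simp only [map_add, map_mul, map_zero] at this
  have : gg K i * gg K j + gg K j * gg K i = 0 := this
  exact eq_neg_of_add_eq_zero_right this

lemma triple (a b c : Fin 6) : gg K a * gg K b * gg K c = 0 := by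
  have h : (a = b ∨ G16.Adj a b) ∨ (b = c ∨ G16.Adj b c) ∨ (a = c ∨ G16.Adj a c) := by
    revert a b c; decide
  rcases h with h | h | h
  · rw [bad_zero K h, zero_mul]
  · rw [mul_assoc, bad_zero K h, mul_zero]
  · rw [mul_assoc, anti, mul_neg, ← mul_assoc, bad_zero K h, zero_mul, neg_zero]

def tt : GraphAlg K (Fin 6) G16 := ∑ i, gg K i

lemma tt_mul_tt : tt K * tt K = 0 := by
  have : tt K = RingQuot.mkAlgHom K (graphRel K (Fin 6) G16)
      (ExteriorAlgebra.ι K (∑ i : Fin 6, Pi.single i 1)) := by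
    simp [tt, gg, gGen, map_sum]
  rw [this, ← map_mul, ExteriorAlgebra.ι_sq_zero, map_zero]

lemma D_apply (x : GraphAlg K (Fin 6) G16) : graphD K (Fin 6) G16 x = tt K * x := rfl

lemma tt_mul_pair (a b : Fin 6) : tt K * (gg K a * gg K b) = 0 := by
  rw [tt, Finset.sum_mul]
  refine Finset.sum_eq_zero fun k _ => ?_
  rw [← mul_assoc, triple]

end P16
end
namespace P16
variable (K : Type*) [Field K]

def a1 : Matrix (Fin 4) (Fin 4) K := !![0,0,0,0; 0,0,0,0; 1,0,0,0; 0,1,0,0]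
def a2 : Matrix (Fin 4) (Fin 4) K := !![0,0,0,0; 1,0,0,0; 0,0,0,0; 0,0,-1,0]
def a12 : Matrix (Fin 4) (Fin 4) K := !![0,0,0,0; 0,0,0,0; 0,0,0,0; 1,0,0,0]

lemma a1_mul_a1 : a1 K * a1 K = 0 := by
  ext i j; fin_cases i <;> fin_cases j <;>
    simp [a1, Matrix.mul_apply, Fin.sum_univ_four, Matrix.vecHead, Matrix.vecTail]

lemma a2_mul_a2 : a2 K * a2 K = 0 := by
  ext i j; fin_cases i <;> fin_cases j <;>
    simp [a2, Matrix.mul_apply, Fin.sum_univ_four, Matrix.vecHead, Matrix.vecTail]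

lemma a1_mul_a2 : a1 K * a2 K = a12 K := by
  ext i j; fin_cases i <;> fin_cases j <;>
    simp [a1, a2, a12, Matrix.mul_apply, Fin.sum_univ_four, Matrix.vecHead, Matrix.vecTail]

lemma a2_mul_a1 : a2 K * a1 K = -a12 K := by
  ext i j; fin_cases i <;> fin_cases j <;>
    simp [a1, a2, a12, Matrix.mul_apply, Fin.sum_univ_four, Matrix.vecHead, Matrix.vecTail]

lemma mul_expand (α β γ δ : K) :
    (α • a1 K + β • a2 K) * (γ • a1 K + δ • a2 K) = (α * δ - β * γ) • a12 K := by
  rw [add_mul, mul_add, mul_add, smul_mul_smul_comm, smul_mul_smul_comm,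
    smul_mul_smul_comm, smul_mul_smul_comm, a1_mul_a1, a2_mul_a2, a1_mul_a2, a2_mul_a1]
  rw [smul_zero, smul_zero, sub_smul, smul_neg]
  abel

end P16
namespace P16
variable (K : Type*) [Field K]

def fpair (i j : Fin 6) : (Fin 6 → K) →ₗ[K] Matrix (Fin 4) (Fin 4) K :=
  (LinearMap.proj i).smulRight (a1 K) + (LinearMap.proj j).smulRight (a2 K)

lemma fpair_apply (i j : Fin 6) (v : Fin 6 → K) :
    fpair K i j v = v i • a1 K + v j • a2 K := rfl

lemma fpair_sq (i j : Fin 6) (v : Fin 6 → K) : fpair K i j v * fpair K i j v = 0 := by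
  rw [fpair_apply, mul_expand]
  rw [mul_comm, sub_self, zero_smul]

def ψ (i j : Fin 6) : ExteriorAlgebra K (Fin 6 → K) →ₐ[K] Matrix (Fin 4) (Fin 4) K :=
  ExteriorAlgebra.lift K ⟨fpair K i j, fpair_sq K i j⟩

lemma ψ_gGen (i j a : Fin 6) :
    ψ K i j (gGen K (Fin 6) a) =
      (if i = a then (1:K) else 0) • a1 K + (if j = a then (1:K) else 0) • a2 K := by
  rw [gGen, ψ, ExteriorAlgebra.lift_ι_apply, fpair_apply, Pi.single_apply, Pi.single_apply]

lemma ψ_compat (i j : Fin 6) (h : ¬ G16.Adj i j) :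
    ∀ x y, graphRel K (Fin 6) G16 x y → ψ K i j x = ψ K i j y := by
  rintro x y ⟨a, b, hab, rfl, rfl⟩
  rw [map_mul, map_zero, ψ_gGen, ψ_gGen, mul_expand]
  have hne : a ≠ b := hab.ne
  rcases eq_or_ne i a with rfl | hia
  · rcases eq_or_ne j b with rfl | hjb
    · exact absurd hab h
    · simp only [hne.symm]
      simp [hjb, Ne.symm hjb]
      intro h1 h2
      exact absurd h1 hne
  · rcases eq_or_ne j a with rfl | hja
    · rcases eq_or_ne i b with rfl | hib
      · exact absurd hab.symm h
      · simp [hia, Ne.symm hia, hib, Ne.symm hib, hne.symm]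
    · simp [hia, hja]

def φ (i j : Fin 6) (h : ¬ G16.Adj i j) :
    GraphAlg K (Fin 6) G16 →ₐ[K] Matrix (Fin 4) (Fin 4) K :=
  RingQuot.liftAlgHom K ⟨ψ K i j, ψ_compat K i j h⟩

lemma φ_gg (i j : Fin 6) (h : ¬ G16.Adj i j) (a : Fin 6) :
    φ K i j h (gg K a) =
      (if i = a then (1:K) else 0) • a1 K + (if j = a then (1:K) else 0) • a2 K := by
  rw [φ, gg, RingQuot.liftAlgHom_mkAlgHom_apply, ψ_gGen]

def entry (p q : Fin 4) : Matrix (Fin 4) (Fin 4) K →ₗ[K] K where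
  toFun M := M p q
  map_add' _ _ := rfl
  map_smul' _ _ := rfl

def cpair (i j : Fin 6) (h : ¬ G16.Adj i j) : GraphAlg K (Fin 6) G16 →ₗ[K] K :=
  (entry K 3 0).comp (φ K i j h).toLinearMap

lemma cpair_g_mul (i j : Fin 6) (h : ¬ G16.Adj i j) (a b : Fin 6) :
    cpair K i j h (gg K a * gg K b) =
      (if i = a then (1:K) else 0) * (if j = b then (1:K) else 0) -
      (if j = a then (1:K) else 0) * (if i = b then (1:K) else 0) := by
  have : cpair K i j h (gg K a * gg K b) = entry K 3 0 (φ K i j h (gg K a) * φ K i j h (gg K b)) := by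
    rw [cpair]; simp [map_mul]
  rw [this, φ_gg, φ_gg, mul_expand]
  simp only [entry, map_smul]
  show _ * (a12 K 3 0) = _
  simp [a12, Matrix.vecHead, Matrix.vecTail]

end P16
namespace P16
variable (K : Type*) [Field K]

def dlin (i : Fin 6) : GraphAlg K (Fin 6) G16 →ₗ[K] K :=
  (entry K 2 0).comp (φ K i i (G16.irrefl)).toLinearMap

lemma dlin_g (i a : Fin 6) : dlin K i (gg K a) = if i = a then (1:K) else 0 := by
  rw [dlin]
  simp only [LinearMap.comp_apply, AlgHom.toLinearMap_apply, φ_gg]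
  simp only [entry, map_add, map_smul]
  show (if i = a then (1:K) else 0) * (a1 K 2 0) + (if i = a then (1:K) else 0) * (a2 K 2 0) = _
  simp [a1, a2, Matrix.vecHead, Matrix.vecTail]

lemma dlin_tt : dlin K 0 (tt K) = 1 := by
  rw [tt, map_sum, Fin.sum_univ_six]
  simp [dlin_g]

lemma tt_ne_zero : tt K ≠ 0 := fun h => by
  have := dlin_tt K
  rw [h, map_zero] at this
  exact zero_ne_one this

def PP : Fin 8 → Fin 6 × Fin 6 := ![(0,4),(0,5),(1,2),(1,3),(2,4),(2,5),(3,4),(3,5)]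

lemma hPP : ∀ k : Fin 8, ¬ G16.Adj (PP k).1 (PP k).2 := by decide

def mm (k : Fin 8) : GraphAlg K (Fin 6) G16 := gg K (PP k).1 * gg K (PP k).2

def cP (k : Fin 8) : GraphAlg K (Fin 6) G16 →ₗ[K] K :=
  cpair K (PP k).1 (PP k).2 (hPP k)

lemma cP_g_mul (k : Fin 8) (a b : Fin 6) :
    cP K k (gg K a * gg K b) =
      (if (PP k).1 = a then (1:K) else 0) * (if (PP k).2 = b then (1:K) else 0) -
      (if (PP k).2 = a then (1:K) else 0) * (if (PP k).1 = b then (1:K) else 0) :=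
  cpair_g_mul K _ _ _ a b

lemma cP_mm (k l : Fin 8) : cP K k (mm K l) = if k = l then (1:K) else 0 := by
  rw [mm, cP_g_mul]
  fin_cases k <;> fin_cases l <;> simp (config := { decide := true }) [PP]

end P16
namespace P16
variable (K : Type*) [Field K]

lemma bz (i j : Fin 6) (h : i = j ∨ G16.Adj i j := by decide) : gg K i * gg K j = 0 :=
  bad_zero K h

lemma mm0 : mm K 0 = gg K 0 * gg K 4 := rfl
lemma mm1 : mm K 1 = gg K 0 * gg K 5 := rfl
lemma mm2 : mm K 2 = gg K 1 * gg K 2 := rfl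
lemma mm3 : mm K 3 = gg K 1 * gg K 3 := rfl
lemma mm4 : mm K 4 = gg K 2 * gg K 4 := rfl
lemma mm5 : mm K 5 = gg K 2 * gg K 5 := rfl
lemma mm6 : mm K 6 = gg K 3 * gg K 4 := rfl
lemma mm7 : mm K 7 = gg K 3 * gg K 5 := rfl

lemma Dg_expand (i : Fin 6) : tt K * gg K i = ∑ j, gg K j * gg K i := by
  rw [tt, Finset.sum_mul]

lemma Dg0 : tt K * gg K 0 = -mm K 0 - mm K 1 := by
  rw [Dg_expand, Fin.sum_univ_six, mm0, mm1, bz K 0 0, bz K 1 0, bz K 2 0, bz K 3 0,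
    anti K 0 4, anti K 0 5]
  abel

lemma Dg1 : tt K * gg K 1 = -mm K 2 - mm K 3 := by
  rw [Dg_expand, Fin.sum_univ_six, mm2, mm3, bz K 0 1, bz K 1 1, bz K 4 1, bz K 5 1,
    anti K 1 2, anti K 1 3]
  abel

lemma Dg2 : tt K * gg K 2 = mm K 2 - mm K 4 - mm K 5 := by
  rw [Dg_expand, Fin.sum_univ_six, mm2, mm4, mm5, bz K 0 2, bz K 2 2, bz K 3 2,
    anti K 2 4, anti K 2 5]
  abel

lemma Dg3 : tt K * gg K 3 = mm K 3 - mm K 6 - mm K 7 := by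
  rw [Dg_expand, Fin.sum_univ_six, mm3, mm6, mm7, bz K 0 3, bz K 2 3, bz K 3 3,
    anti K 3 4, anti K 3 5]
  abel

lemma Dg4 : tt K * gg K 4 = mm K 0 + mm K 4 + mm K 6 := by
  rw [Dg_expand, Fin.sum_univ_six, mm0, mm4, mm6, bz K 1 4, bz K 4 4, bz K 5 4]
  abel

lemma Dg5 : tt K * gg K 5 = mm K 1 + mm K 5 + mm K 7 := by
  rw [Dg_expand, Fin.sum_univ_six, mm1, mm5, mm7, bz K 1 5, bz K 4 5, bz K 5 5]
  abel

end P16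
namespace P16
variable (K : Type*) [Field K]

lemma mm_indep : LinearIndependent K (mm K) := by
  rw [Fintype.linearIndependent_iff]
  intro c h k
  have := congrArg (cP K k) h
  rw [map_sum, map_zero] at this
  simpa [map_smul, cP_mm, Finset.sum_ite_eq] using this

lemma dg_succ_indep : LinearIndependent K (fun k : Fin 5 => tt K * gg K k.succ) := by
  rw [Fintype.linearIndependent_iff]
  intro c h
  have h5 : c 0 • (tt K * gg K 1) + c 1 • (tt K * gg K 2) + c 2 • (tt K * gg K 3)
      + c 3 • (tt K * gg K 4) + c 4 • (tt K * gg K 5) = 0 := by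
    rw [← h, Fin.sum_univ_five]; rfl
  rw [Dg1, Dg2, Dg3, Dg4, Dg5] at h5
  have e0 : c 3 = 0 := by simpa [cP_mm] using congrArg (cP K 0) h5
  have e1 : c 4 = 0 := by simpa [cP_mm] using congrArg (cP K 1) h5
  have e2 : -c 0 + c 1 = 0 := by simpa [cP_mm] using congrArg (cP K 2) h5
  have e3 : -c 0 + c 2 = 0 := by simpa [cP_mm] using congrArg (cP K 3) h5
  have e4 : -c 1 + c 3 = 0 := by simpa [cP_mm] using congrArg (cP K 4) h5
  intro k
  fin_cases k
  · show c 0 = 0; linear_combination -e2 - e4 + e0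
  · show c 1 = 0; linear_combination -e4 + e0
  · show c 2 = 0; linear_combination e3 - e2 - e4 + e0
  · show c 3 = 0; exact e0
  · show c 4 = 0; exact e1

end P16
namespace P16
variable (K : Type*) [Field K]

lemma trich : ∀ i j : Fin 6, (i = j ∨ G16.Adj i j) ∨
    (∃ k : Fin 8, (i, j) = PP k) ∨ (∃ k : Fin 8, (j, i) = PP k) := by decide

lemma pair_mem_span (i j : Fin 6) :
    gg K i * gg K j ∈ Submodule.span K (Set.range (mm K)) := by
  have hm : ∀ k : Fin 8, mm K k ∈ Submodule.span K (Set.range (mm K)) :=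
    fun k => Submodule.subset_span ⟨k, rfl⟩
  rcases trich i j with h | ⟨k, hk⟩ | ⟨k, hk⟩
  · rw [bad_zero K h]; exact zero_mem _
  · have : mm K k = gg K i * gg K j := by rw [mm, ← hk]
    exact this ▸ hm k
  · rw [anti K j i]
    refine neg_mem ?_
    have : mm K k = gg K j * gg K i := by rw [mm, ← hk]
    exact this ▸ hm k

lemma span_pairs_eq :
    Submodule.span K {u | ∃ i j : Fin 6, u = gg K i * gg K j} =
      Submodule.span K (Set.range (mm K)) := by
  apply le_antisymm
  · rw [Submodule.span_le]
    rintro u ⟨i, j, rfl⟩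
    exact pair_mem_span K i j
  · rw [Submodule.span_le]
    rintro _ ⟨k, rfl⟩
    exact Submodule.subset_span ⟨(PP k).1, (PP k).2, rfl⟩

lemma finrank_V2 :
    Module.finrank K (Submodule.span K {u | ∃ i j : Fin 6, u = gg K i * gg K j}) = 8 := by
  rw [span_pairs_eq, finrank_span_eq_card (mm_indep K), Fintype.card_fin]

lemma sum_dg : ∑ i : Fin 6, tt K * gg K i = 0 := by
  rw [← Finset.mul_sum, ← tt, tt_mul_tt]

lemma span_dg_eq :
    Submodule.span K (Set.range fun i : Fin 6 => tt K * gg K i) =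
      Submodule.span K (Set.range fun k : Fin 5 => tt K * gg K k.succ) := by
  apply le_antisymm
  · rw [Submodule.span_le]
    rintro _ ⟨i, rfl⟩
    have hm : ∀ k : Fin 5, tt K * gg K k.succ ∈
        Submodule.span K (Set.range fun k : Fin 5 => tt K * gg K k.succ) :=
      fun k => Submodule.subset_span ⟨k, rfl⟩
    fin_cases i
    · have hs := sum_dg K
      rw [Fin.sum_univ_six, add_assoc, add_assoc, add_assoc, add_assoc] at hs
      have h0 := eq_neg_of_add_eq_zero_left hs
      show tt K * gg K 0 ∈ _
      rw [h0]
      exact neg_mem (add_mem (hm 0) (add_mem (hm 1) (add_mem (hm 2) (add_mem (hm 3) (hm 4)))))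
    · exact hm 0
    · exact hm 1
    · exact hm 2
    · exact hm 3
    · exact hm 4
  · rw [Submodule.span_le]
    rintro _ ⟨k, rfl⟩
    exact Submodule.subset_span ⟨k.succ, rfl⟩

lemma finrank_DV1 :
    Module.finrank K (Submodule.span K (Set.range fun i : Fin 6 => tt K * gg K i)) = 5 := by
  rw [span_dg_eq, finrank_span_eq_card (dg_succ_indep K), Fintype.card_fin]

lemma tt_mem_V1 : tt K ∈ Submodule.span K (Set.range (gg K)) := by
  rw [tt]
  exact Submodule.sum_mem _ fun i _ => Submodule.subset_span ⟨i, rfl⟩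

lemma V1_inf_ker :
    Submodule.span K (Set.range (gg K)) ⊓ LinearMap.ker (graphD K (Fin 6) G16) =
      Submodule.span K {tt K} := by
  apply le_antisymm
  · intro u hu
    obtain ⟨hu1, hu2⟩ := Submodule.mem_inf.mp hu
    obtain ⟨c, hc⟩ := (Submodule.mem_span_range_iff_exists_fun K).mp hu1
    rw [LinearMap.mem_ker, D_apply, ← hc, Finset.mul_sum] at hu2
    have h6 : c 0 • (tt K * gg K 0) + c 1 • (tt K * gg K 1) + c 2 • (tt K * gg K 2)
        + c 3 • (tt K * gg K 3) + c 4 • (tt K * gg K 4) + c 5 • (tt K * gg K 5) = 0 := by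
      rw [← hu2, Fin.sum_univ_six]
      simp only [mul_smul_comm]
    rw [Dg0, Dg1, Dg2, Dg3, Dg4, Dg5] at h6
    have e0 : -c 0 + c 4 = 0 := by simpa [cP_mm] using congrArg (cP K 0) h6
    have e1 : -c 0 + c 5 = 0 := by simpa [cP_mm] using congrArg (cP K 1) h6
    have e2 : -c 1 + c 2 = 0 := by simpa [cP_mm] using congrArg (cP K 2) h6
    have e4 : -c 2 + c 4 = 0 := by simpa [cP_mm] using congrArg (cP K 4) h6
    have e6 : -c 3 + c 4 = 0 := by simpa [cP_mm] using congrArg (cP K 6) h6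
    have f1 : c 1 = c 0 := by linear_combination -e2 - e4 + e0
    have f2 : c 2 = c 0 := by linear_combination -e4 + e0
    have f3 : c 3 = c 0 := by linear_combination -e6 + e0
    have f4 : c 4 = c 0 := by linear_combination e0
    have f5 : c 5 = c 0 := by linear_combination e1
    refine Submodule.mem_span_singleton.mpr ⟨c 0, ?_⟩
    rw [← hc, tt, Finset.smul_sum, Fin.sum_univ_six, Fin.sum_univ_six, f1, f2, f3, f4, f5]
  · rw [Submodule.span_le, Set.singleton_subset_iff]
    exact ⟨tt_mem_V1 K, by rw [SetLike.mem_coe, LinearMap.mem_ker, D_apply, tt_mul_tt]⟩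

end P16

open Module LinearMap in
/-- For `A = Gr(x₁,…,x₆)/(x₁x₂, x₁x₃, x₁x₄, x₂x₅, x₂x₆, x₃x₄, x₅x₆)` with
`D(ξ) = (x₁+⋯+x₆)ξ`: among `D(x₁),…,D(x₆)` exactly `5` are linearly independent, the
degree-`2` component has dimension `8`, the homology in degree `1` vanishes
(`dim (ker D ∩ A₁) = dim D(A₀)`), and the homology in degree `2` has dimension `3`. -/
theorem stmt16 (K : Type*) [Field K] [CharZero K] :
    (letI g : Fin 6 → GraphAlg K (Fin 6) G16 :=
        fun i => RingQuot.mkAlgHom K (graphRel K (Fin 6) G16) (gGen K (Fin 6) i)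
     letI D := graphD K (Fin 6) G16
     letI V0 : Submodule K (GraphAlg K (Fin 6) G16) := Submodule.span K {(1 : GraphAlg K (Fin 6) G16)}
     letI V1 : Submodule K (GraphAlg K (Fin 6) G16) := Submodule.span K (Set.range g)
     letI V2 : Submodule K (GraphAlg K (Fin 6) G16) :=
        Submodule.span K {u | ∃ i j : Fin 6, u = g i * g j}
     finrank K ↥(Submodule.map D V1) = 5 ∧
     finrank K ↥V2 = 8 ∧
     finrank K ↥(V1 ⊓ ker D) = finrank K ↥(Submodule.map D V0) ∧
     finrank K ↥(V2 ⊓ ker D) - finrank K ↥(Submodule.map D V1) = 3) := by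
  have hmap : Submodule.map (graphD K (Fin 6) G16) (Submodule.span K (Set.range (P16.gg K)))
      = Submodule.span K (Set.range fun i : Fin 6 => P16.tt K * P16.gg K i) := by
    rw [Submodule.map_span, ← Set.range_comp]
    congr 1
  have h1 : finrank K (Submodule.map (graphD K (Fin 6) G16)
      (Submodule.span K (Set.range (P16.gg K)))) = 5 := by
    rw [hmap, P16.finrank_DV1]
  have hmap0 : Submodule.map (graphD K (Fin 6) G16)
      (Submodule.span K {(1 : GraphAlg K (Fin 6) G16)}) = Submodule.span K {P16.tt K} := by
    rw [Submodule.map_span, Set.image_singleton, P16.D_apply, mul_one]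
  have hker2 : Submodule.span K {u | ∃ i j : Fin 6, u = P16.gg K i * P16.gg K j} ⊓
      LinearMap.ker (graphD K (Fin 6) G16) =
      Submodule.span K {u | ∃ i j : Fin 6, u = P16.gg K i * P16.gg K j} := by
    refine inf_eq_left.mpr ?_
    rw [Submodule.span_le]
    rintro u ⟨i, j, rfl⟩
    rw [SetLike.mem_coe, LinearMap.mem_ker, P16.D_apply, P16.tt_mul_pair]
  refine ⟨h1, P16.finrank_V2 K, ?_, ?_⟩
  · show finrank K ↥(Submodule.span K (Set.range (P16.gg K)) ⊓ ker (graphD K (Fin 6) G16)) =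
        finrank K ↥(Submodule.map (graphD K (Fin 6) G16)
          (Submodule.span K {(1 : GraphAlg K (Fin 6) G16)}))
    rw [P16.V1_inf_ker, hmap0]
  · show finrank K ↥(Submodule.span K {u | ∃ i j : Fin 6, u = P16.gg K i * P16.gg K j} ⊓
          ker (graphD K (Fin 6) G16)) -
        finrank K ↥(Submodule.map (graphD K (Fin 6) G16)
          (Submodule.span K (Set.range (P16.gg K)))) = 3
    rw [hker2, P16.finrank_V2, h1]
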